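/- Let X = Xᵀ and Y = Yᵀ in ℝ^{n×n} satisfy ker R_X ⊆ ker S_X and ker R_Y ⊆ ker S_Y, and let Δ := X − Y. Then A_Yᵀ Δ (A_Y − A_X) = A_Yᵀ Δ B R_X† Bᵀ Δ A_Y. -/

import Mathlib

open Matrix

section Pinv

variable {κ : Type*} [Fintype κ] [DecidableEq κ]

lemma ct_eq_t {α β : Type*} (M : Matrix α β ℝ) : Mᴴ = Mᵀ := by
  ext i j; simp [conjTranspose_apply]

/-- Existence of a Penrose inverse for real symmetric matrices. -/
lemma exists_penrose (M : Matrix κ κ ℝ) (hM : Mᵀ = M) :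
    ∃ P : Matrix κ κ ℝ,
      M * P * M = M ∧ P * M * P = P ∧ (M * P)ᵀ = M * P ∧ (P * M)ᵀ = P * M := by
  have hH : M.IsHermitian := by rwa [IsHermitian, ct_eq_t]
  set U : Matrix κ κ ℝ := (hH.eigenvectorUnitary : Matrix κ κ ℝ) with hU
  set e : κ → ℝ := hH.eigenvalues with he
  have hUU : star U * U = 1 := by
    rw [hU, ← Unitary.coe_star]; exact Unitary.coe_star_mul_self _
  have hspec : M = U * diagonal e * star U := by
    have := hH.spectral_theorem
    simpa [he, Function.comp] using this
  set d : κ → ℝ := fun i => if e i = 0 then 0 else (e i)⁻¹ with hd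
  have key : ∀ D E : Matrix κ κ ℝ,
      (U * D * star U) * (U * E * star U) = U * (D * E) * star U := by
    intro D E
    calc (U * D * star U) * (U * E * star U)
        = U * D * (star U * U) * E * star U := by noncomm_ring
      _ = U * (D * E) * star U := by rw [hUU, mul_one]; noncomm_ring
  have hede : (fun i => e i * d i * e i) = e := by
    funext i
    by_cases h : e i = 0
    · simp [hd, h]
    · simp [hd, h]
  have hded : (fun i => d i * e i * d i) = d := by
    funext i
    by_cases h : e i = 0
    · simp [hd, h]
    · simp [hd, h]
  have hsymm : ∀ f : κ → ℝ, (U * diagonal f * star U)ᵀ = U * diagonal f * star U := by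
    intro f
    have hdf : star (diagonal f) = diagonal f := by
      rw [star_eq_conjTranspose, diagonal_conjTranspose]
      simp
    rw [← ct_eq_t, ← star_eq_conjTranspose]
    simp only [StarMul.star_mul, star_star, hdf]
    rw [mul_assoc]
  refine ⟨U * diagonal d * star U, ?_, ?_, ?_, ?_⟩
  · rw [hspec, key, key, diagonal_mul_diagonal, diagonal_mul_diagonal, hede]
  · rw [hspec, key, key, diagonal_mul_diagonal, diagonal_mul_diagonal, hded]
  · rw [hspec, key, diagonal_mul_diagonal]
    exact hsymm _
  · rw [hspec, key, diagonal_mul_diagonal]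
    exact hsymm _

end Pinv

-- The Moore–Penrose pseudoinverse of a real matrix, characterised by the four
-- Penrose equations (it exists and is unique for every real matrix).
open Classical in
noncomputable def mpinv {α β : Type*} [Fintype α] [Fintype β]
    (M : Matrix α β ℝ) : Matrix β α ℝ :=
  if h : ∃ P : Matrix β α ℝ,
      M * P * M = M ∧ P * M * P = P ∧ (M * P)ᵀ = M * P ∧ (P * M)ᵀ = P * M
  then h.choose else 0

/-- `R_X = R + BᵀXB`. -/
noncomputable def RX {ι κ : Type*} [Fintype ι] [Fintype κ]
    (R : Matrix κ κ ℝ) (B : Matrix ι κ ℝ) (X : Matrix ι ι ℝ) : Matrix κ κ ℝ :=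
  R + Bᵀ * X * B

/-- `S_X = AᵀXB + S`. -/
noncomputable def SX {ι κ : Type*} [Fintype ι] [Fintype κ]
    (A : Matrix ι ι ℝ) (B S : Matrix ι κ ℝ) (X : Matrix ι ι ℝ) : Matrix ι κ ℝ :=
  Aᵀ * X * B + S

/-- `K_X = R_X† S_Xᵀ`. -/
noncomputable def KX {ι κ : Type*} [Fintype ι] [Fintype κ]
    (A : Matrix ι ι ℝ) (B S : Matrix ι κ ℝ) (R : Matrix κ κ ℝ) (X : Matrix ι ι ℝ) :
    Matrix κ ι ℝ :=
  mpinv (RX R B X) * (SX A B S X)ᵀ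

/-- The closed-loop matrix `A_X = A - B K_X`. -/
noncomputable def AX {ι κ : Type*} [Fintype ι] [Fintype κ]
    (A : Matrix ι ι ℝ) (B S : Matrix ι κ ℝ) (R : Matrix κ κ ℝ) (X : Matrix ι ι ℝ) :
    Matrix ι ι ℝ :=
  A - B * KX A B S R X

/-- The kernel condition `ker R_X ⊆ ker S_X`. -/
def KerCond {ι κ : Type*} [Fintype ι] [Fintype κ]
    (A : Matrix ι ι ℝ) (B S : Matrix ι κ ℝ) (R : Matrix κ κ ℝ) (X : Matrix ι ι ℝ) : Prop :=
  ∀ v : κ → ℝ, (RX R B X).mulVec v = 0 → (SX A B S X).mulVec v = 0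

/-- The Riccati operator `𝔇(X) = X - AᵀXA + S_X R_X† S_Xᵀ - Q`. -/
noncomputable def DOp {ι κ : Type*} [Fintype ι] [Fintype κ]
    (A Q : Matrix ι ι ℝ) (B S : Matrix ι κ ℝ) (R : Matrix κ κ ℝ) (X : Matrix ι ι ℝ) :
    Matrix ι ι ℝ :=
  X - Aᵀ * X * A + SX A B S X * mpinv (RX R B X) * (SX A B S X)ᵀ - Q

/-- The Riccati map `ℛ(X) = AᵀXA - S_X R_X† S_Xᵀ + Q`. -/
noncomputable def Ricc {ι κ : Type*} [Fintype ι] [Fintype κ]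
    (A Q : Matrix ι ι ℝ) (B S : Matrix ι κ ℝ) (R : Matrix κ κ ℝ) (X : Matrix ι ι ℝ) :
    Matrix ι ι ℝ :=
  Aᵀ * X * A - SX A B S X * mpinv (RX R B X) * (SX A B S X)ᵀ + Q

/-- `X` is a symmetric solution of CGDARE(Σ): it is symmetric, satisfies the GDARE and
the kernel condition `ker R_X ⊆ ker S_X`. -/
def IsCGDARESolution {ι κ : Type*} [Fintype ι] [Fintype κ]
    (A Q : Matrix ι ι ℝ) (B S : Matrix ι κ ℝ) (R : Matrix κ κ ℝ) (X : Matrix ι ι ℝ) : Prop :=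
  Xᵀ = X ∧ X = Ricc A Q B S R X ∧ KerCond A B S R X

/-- The matrix `N = [[A, 0, B], [Q, -I, S], [Sᵀ, 0, R]]` of the extended symplectic pencil. -/
noncomputable def Nmat {n m : ℕ} (A Q : Matrix (Fin n) (Fin n) ℝ)
    (B S : Matrix (Fin n) (Fin m) ℝ) (R : Matrix (Fin m) (Fin m) ℝ) :
    Matrix (Fin n ⊕ (Fin n ⊕ Fin m)) (Fin n ⊕ (Fin n ⊕ Fin m)) ℝ :=
  fromBlocks A (fromCols 0 B) (fromRows Q Sᵀ) (fromBlocks (-1) S 0 R)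

/-- The matrix `M = [[I, 0, 0], [0, -Aᵀ, 0], [0, -Bᵀ, 0]]` of the extended symplectic pencil. -/
noncomputable def Mmat {n m : ℕ} (A : Matrix (Fin n) (Fin n) ℝ)
    (B : Matrix (Fin n) (Fin m) ℝ) :
    Matrix (Fin n ⊕ (Fin n ⊕ Fin m)) (Fin n ⊕ (Fin n ⊕ Fin m)) ℝ :=
  fromBlocks 1 0 0 (fromBlocks (-Aᵀ) 0 (-Bᵀ) 0)

lemma mpinv_spec {κ : Type*} [Fintype κ] [DecidableEq κ]
    (M : Matrix κ κ ℝ) (hM : Mᵀ = M) :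
    M * mpinv M * M = M ∧ mpinv M * M * mpinv M = mpinv M ∧
      (M * mpinv M)ᵀ = M * mpinv M ∧ (mpinv M * M)ᵀ = mpinv M * M := by
  have h := exists_penrose M hM
  rw [mpinv, dif_pos h]
  exact h.choose_spec

lemma kercond_mul {ι κ μ : Type*} [Fintype ι] [Fintype κ] [Fintype μ]
    {A : Matrix ι ι ℝ} {B S : Matrix ι κ ℝ} {R : Matrix κ κ ℝ} {X : Matrix ι ι ℝ}
    (hk : KerCond A B S R X) (N : Matrix κ μ ℝ) (hN : RX R B X * N = 0) :
    SX A B S X * N = 0 := by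
  ext i j
  have hv : (RX R B X).mulVec (fun k => N k j) = 0 := by
    funext i'
    have := congrFun (congrFun hN i') j
    simpa [mulVec, dotProduct, mul_apply] using this
  have := congrFun (hk _ hv) i
  simpa [mulVec, dotProduct, mul_apply] using this



/-- `A_Yᵀ Δ (A_Y - A_X) = A_Yᵀ Δ B R_X† Bᵀ Δ A_Y` with `Δ = X - Y`. -/
theorem stmt_8 {n m : ℕ} (hn : 0 < n) (hm : 0 < m)
    (A Q : Matrix (Fin n) (Fin n) ℝ) (B S : Matrix (Fin n) (Fin m) ℝ)
    (R : Matrix (Fin m) (Fin m) ℝ)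
    (hPi : (fromBlocks Q S Sᵀ R).PosSemidef)
    (X Y : Matrix (Fin n) (Fin n) ℝ) (hX : Xᵀ = X) (hY : Yᵀ = Y)
    (hkX : KerCond A B S R X) (hkY : KerCond A B S R Y) :
    (AX A B S R Y)ᵀ * (X - Y) * (AX A B S R Y - AX A B S R X) =
      (AX A B S R Y)ᵀ * (X - Y) * B * mpinv (RX R B X) * Bᵀ * (X - Y) * AX A B S R Y := by
  set Rx := RX R B X with hRxdef
  set Ry := RX R B Y with hRydef
  set Sx := SX A B S X with hSxdef
  set Sy := SX A B S Y with hSydef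
  set P := mpinv Rx with hPdef
  set Py := mpinv Ry with hPydef
  set Kx := KX A B S R X with hKxdef
  set Ky := KX A B S R Y with hKydef
  have hKx : Kx = P * Sxᵀ := by
    rw [hKxdef, hPdef, hSxdef, hRxdef]; rfl
  have hKy : Ky = Py * Syᵀ := by
    rw [hKydef, hPydef, hSydef, hRydef]; rfl
  have hAXy : AX A B S R Y = A - B * Ky := by rw [hKydef]; rfl
  have hAXx : AX A B S R X = A - B * Kx := by rw [hKxdef]; rfl
  -- symmetry of R
  have hR : Rᵀ = R := by
    have := (isHermitian_fromBlocks_iff.mp hPi.1).2.2.2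
    rwa [IsHermitian, ct_eq_t] at this
  have hRxT : Rxᵀ = Rx := by
    rw [hRxdef]
    show (R + Bᵀ * X * B)ᵀ = R + Bᵀ * X * B
    rw [transpose_add, transpose_mul, transpose_mul, transpose_transpose, hX, hR,
      Matrix.mul_assoc]
  have hRyT : Ryᵀ = Ry := by
    rw [hRydef]
    show (R + Bᵀ * Y * B)ᵀ = R + Bᵀ * Y * B
    rw [transpose_add, transpose_mul, transpose_mul, transpose_transpose, hY, hR,
      Matrix.mul_assoc]
  obtain ⟨p1x, p2x, p3x, p4x⟩ := mpinv_spec Rx hRxT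
  obtain ⟨p1y, p2y, p3y, p4y⟩ := mpinv_spec Ry hRyT
  -- kernel consequences
  have hRx0 : Rx * (1 - P * Rx) = 0 := by
    rw [Matrix.mul_sub, Matrix.mul_one, ← Matrix.mul_assoc, p1x, sub_self]
  have hSx0 : Sx * (1 - P * Rx) = 0 := by
    rw [hSxdef]
    exact kercond_mul hkX _ (by rw [← hRxdef]; exact hRx0)
  have hRy0 : Ry * (1 - Ry * Py) = 0 := by
    have e1 : (1 - Ry * Py) * Ry = 0 := by
      rw [Matrix.sub_mul, Matrix.one_mul, p1y, sub_self]
    calc Ry * (1 - Ry * Py) = ((1 - Ry * Py)ᵀ * Ryᵀ)ᵀ := by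
          rw [← transpose_mul, transpose_transpose]
      _ = ((1 - Ry * Py) * Ry)ᵀ := by rw [transpose_sub, transpose_one, p3y, hRyT]
      _ = 0 := by rw [e1, transpose_zero]
  have hSy0 : Sy * (1 - Ry * Py) = 0 := by
    rw [hSydef]
    exact kercond_mul hkY _ (by rw [← hRydef]; exact hRy0)
  have f2 : Sy * (Ry * Py) = Sy := by
    rw [Matrix.mul_sub, Matrix.mul_one, sub_eq_zero] at hSy0
    exact hSy0.symm
  have hRyKy : Ry * Py * Syᵀ = Syᵀ := by
    have := congrArg transpose f2
    rwa [transpose_mul, p3y] at this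
  have h2 : Kyᵀ * Ry = Sy := by
    calc Kyᵀ * Ry = (Ryᵀ * Ky)ᵀ := by rw [transpose_mul, transpose_transpose]
      _ = (Ry * Ky)ᵀ := by rw [hRyT]
      _ = Sy := by rw [hKy, ← Matrix.mul_assoc, hRyKy, transpose_transpose]
  -- difference identities
  have hSdiff : Aᵀ * (X - Y) * B = Sx - Sy := by
    rw [hSxdef, hSydef]
    show Aᵀ * (X - Y) * B = (Aᵀ * X * B + S) - (Aᵀ * Y * B + S)
    rw [Matrix.mul_sub, Matrix.sub_mul]
    abel
  have hRdiff : Bᵀ * (X - Y) * B = Rx - Ry := by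
    rw [hRxdef, hRydef]
    show Bᵀ * (X - Y) * B = (R + Bᵀ * X * B) - (R + Bᵀ * Y * B)
    rw [Matrix.mul_sub, Matrix.sub_mul]
    abel
  have hW : (AX A B S R Y)ᵀ * (X - Y) * B = Sx - Kyᵀ * Rx := by
    have h1 : (AX A B S R Y)ᵀ * (X - Y) * B
        = Aᵀ * (X - Y) * B - Kyᵀ * (Bᵀ * (X - Y) * B) := by
      rw [hAXy, transpose_sub, transpose_mul]
      simp only [Matrix.sub_mul, Matrix.mul_assoc]
    rw [h1, hSdiff, hRdiff, Matrix.mul_sub, h2]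
    abel
  have hDT : (X - Y)ᵀ = X - Y := by rw [transpose_sub, hX, hY]
  have hB' : Bᵀ * (X - Y) * AX A B S R Y = Sxᵀ - Rx * Ky := by
    have h1 : Bᵀ * (X - Y) * AX A B S R Y = ((AX A B S R Y)ᵀ * (X - Y) * B)ᵀ := by
      simp only [transpose_mul, transpose_transpose, hDT, Matrix.mul_assoc]
    rw [h1, hW, transpose_sub, transpose_mul, transpose_transpose, hRxT]
  have hAXdiff : AX A B S R Y - AX A B S R X = B * (Kx - Ky) := by
    rw [hAXy, hAXx, Matrix.mul_sub]
    abel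
  have hWP : (Sx - Kyᵀ * Rx) * (1 - P * Rx) = 0 := by
    rw [Matrix.sub_mul, hSx0, Matrix.mul_assoc, hRx0, Matrix.mul_zero, sub_self]
  have hmain : (Sx - Kyᵀ * Rx) * (Kx - Ky)
      = (Sx - Kyᵀ * Rx) * (P * (Sxᵀ - Rx * Ky)) := by
    have hdiff : (Sx - Kyᵀ * Rx) * (P * (Sxᵀ - Rx * Ky)) - (Sx - Kyᵀ * Rx) * (Kx - Ky)
        = ((Sx - Kyᵀ * Rx) * (1 - P * Rx)) * Ky := by
      rw [hKx]
      simp only [Matrix.mul_sub, Matrix.sub_mul, Matrix.mul_one, Matrix.one_mul,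
        Matrix.mul_assoc]
      abel
    rw [hWP, Matrix.zero_mul, sub_eq_zero] at hdiff
    exact hdiff.symm
  calc (AX A B S R Y)ᵀ * (X - Y) * (AX A B S R Y - AX A B S R X)
      = ((AX A B S R Y)ᵀ * (X - Y) * B) * (Kx - Ky) := by
        rw [hAXdiff]
        simp only [Matrix.mul_assoc]
    _ = (Sx - Kyᵀ * Rx) * (Kx - Ky) := by rw [hW]
    _ = (Sx - Kyᵀ * Rx) * (P * (Sxᵀ - Rx * Ky)) := hmain
    _ = ((AX A B S R Y)ᵀ * (X - Y) * B) * (P * (Bᵀ * (X - Y) * AX A B S R Y)) := by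
        rw [hW, hB']
    _ = (AX A B S R Y)ᵀ * (X - Y) * B * P * Bᵀ * (X - Y) * AX A B S R Y := by
        simp only [Matrix.mul_assoc]
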